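/- Let q ≥ 0 be an integer and P(x) = 1 + |x|^{2q} on ℝ^d. For all multi-indices α₁ and α₂ there exists a constant C = C(d, q, α₁, α₂) > 0 such that |D^{α₂}( P^{−1}·D^{α₁}P )(x)| ≤ C·(1+|x|²)^{−(|α₁|+|α₂|)/2} for all x ∈ ℝ^d. -/

import Mathlib

open scoped ENNReal NNReal BigOperators
open Set

noncomputable section

abbrev Euc (d : ℕ) := EuclideanSpace ℝ (Fin d)

/-- Partial derivative in coordinate direction `i`. -/
noncomputable def pd {d : ℕ} (i : Fin d) (f : Euc d → ℝ) : Euc d → ℝ :=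
  fun x => fderiv ℝ f x (EuclideanSpace.single i 1)

/-- Iterated partial derivative `D^α` for a multi-index `α`. -/
noncomputable def pdM {d : ℕ} (α : Fin d → ℕ) (f : Euc d → ℝ) : Euc d → ℝ :=
  ((List.ofFn fun i : Fin d => (pd i)^[α i]).foldr (· ∘ ·) id) f

/-- The order `|α|` of a multi-index. -/
def msize {d : ℕ} (α : Fin d → ℕ) : ℕ := ∑ i, α i

/-- The finite set of multi-indices with `|α| ≤ p`. -/
def multiIdxLe (d p : ℕ) : Finset (Fin d → ℕ) :=
  (Finset.range (p + 1)).biUnion fun n => Finset.Nat.antidiagonalTuple d n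

/-- The finite set of multi-indices with `|α| = p`. -/
def multiIdxEq (d p : ℕ) : Finset (Fin d → ℕ) := Finset.Nat.antidiagonalTuple d p

/-- Sup norm over a set, valued in `ℝ≥0∞`. -/
noncomputable def eSupSet {d : ℕ} (U : Set (Euc d)) (g : Euc d → ℝ) : ℝ≥0∞ :=
  ⨆ x ∈ U, (‖g x‖₊ : ℝ≥0∞)

/-- The `β`-Hölder seminorm over a set, valued in `ℝ≥0∞`. -/
noncomputable def eHolderSet {d : ℕ} (β : ℝ) (U : Set (Euc d)) (g : Euc d → ℝ) : ℝ≥0∞ :=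
  ⨆ x ∈ U, ⨆ y ∈ U, (‖g x - g y‖₊ : ℝ≥0∞) / edist x y ^ β

/-- The `H^{p+β}(U)` Hölder norm. -/
noncomputable def holderNormSet (d p : ℕ) (β : ℝ) (U : Set (Euc d)) (g : Euc d → ℝ) : ℝ≥0∞ :=
  (∑ α ∈ multiIdxLe d p, eSupSet U (pdM α g)) +
    ∑ α ∈ multiIdxEq d p, eHolderSet β U (pdM α g)

/-- The `H^{p+β}(ℝ^d)` norm; for `β = 0` this is the `BC^p` norm. -/
noncomputable def hNorm (d p : ℕ) (β : ℝ) (g : Euc d → ℝ) : ℝ≥0∞ :=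
  if β = 0 then ∑ α ∈ multiIdxLe d p, eSupSet Set.univ (pdM α g)
  else holderNormSet d p β Set.univ g

/-- Polynomial weight `P(x) = 1 + |x|^{2q}`. -/
noncomputable def Pw (d q : ℕ) (x : Euc d) : ℝ := 1 + ‖x‖ ^ (2 * q)

/-- Euclidean norm of a vector given by coordinates. -/
noncomputable def vnorm {d : ℕ} (v : Fin d → ℝ) : ℝ := Real.sqrt (∑ i, v i ^ 2)

/-- Frobenius norm of a matrix. -/
noncomputable def mnorm {d m : ℕ} (A : Fin d → Fin m → ℝ) : ℝ := Real.sqrt (∑ i, ∑ k, A i k ^ 2)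

/-- Diffusion matrix `a_{ij} = (1/2) ∑_k σ_{ik} σ_{jk}`. -/
noncomputable def aOf {d m : ℕ} (σ : ℝ → Euc d → Fin d → Fin m → ℝ) (t : ℝ) (x : Euc d)
    (i j : Fin d) : ℝ :=
  (1 / 2) * ∑ k, σ t x i k * σ t x j k

/-- The second order operator `𝒜ᵗ` applied to a function of the space variable. -/
noncomputable def AopS {d : ℕ} (a : ℝ → Euc d → Fin d → Fin d → ℝ)
    (b : ℝ → Euc d → Fin d → ℝ) (t : ℝ) (g : Euc d → ℝ) (x : Euc d) : ℝ :=
  ∑ i, ∑ j, a t x i j * pd i (pd j g) x + ∑ i, b t x i * pd i g x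

/-- `u` is of class `C^{1,2}` on `St × Sx` (with joint continuity of the derivatives). -/
structure C12On (d : ℕ) (St : Set ℝ) (Sx : Set (Euc d)) (u : ℝ → Euc d → ℝ) : Prop where
  dt : ∀ x ∈ Sx, ∀ t ∈ St, DifferentiableAt ℝ (fun s => u s x) t
  cx : ∀ t ∈ St, ContDiffOn ℝ 2 (u t) Sx
  cont : ContinuousOn (fun p : ℝ × Euc d => u p.1 p.2) (St ×ˢ Sx)
  cont_dt : ContinuousOn (fun p : ℝ × Euc d => deriv (fun s => u s p.2) p.1) (St ×ˢ Sx)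
  cont_dx : ∀ i, ContinuousOn (fun p : ℝ × Euc d => pd i (u p.1) p.2) (St ×ˢ Sx)
  cont_dxx : ∀ i j, ContinuousOn (fun p : ℝ × Euc d => pd i (pd j (u p.1)) p.2) (St ×ˢ Sx)

/-- `u` is bounded and uniformly continuous on `[0,T] × ℝ^d`. -/
def BCOn (d : ℕ) (T : ℝ) (u : ℝ → Euc d → ℝ) : Prop :=
  (∃ M, ∀ t ∈ Set.Icc 0 T, ∀ x, |u t x| ≤ M) ∧
    UniformContinuousOn (fun p : ℝ × Euc d => u p.1 p.2) (Set.Icc 0 T ×ˢ Set.univ)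

namespace WLD

open ContinuousLinearMap

inductive Sym (d q : ℕ) : ℤ → (Euc d → ℝ) → Prop
  | zero (m : ℤ) : Sym d q m (fun _ => 0)
  | const (c : ℝ) : Sym d q 0 (fun _ => c)
  | coord (i : Fin d) : Sym d q 1 (fun x => x i)
  | invP : Sym d q (-(2 * q : ℤ)) (fun x => (Pw d q x)⁻¹)
  | add {m f g} : Sym d q m f → Sym d q m g → Sym d q m (fun x => f x + g x)
  | mul {m n f g} : Sym d q m f → Sym d q n g → Sym d q (m + n) (fun x => f x * g x)
  | mono {m n f} : Sym d q m f → m ≤ n → Sym d q n f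

variable {d q : ℕ}

lemma Sym.congr {m f g} (h : Sym d q m f) (e : ∀ x, f x = g x) : Sym d q m g := by
  have hfg : f = g := funext e
  rwa [hfg] at h

lemma Sym.of_eq {m n : ℤ} {f} (h : Sym d q m f) (e : m = n) : Sym d q n f := e ▸ h

lemma sym_sum {ι : Type*} (s : Finset ι) (m : ℤ) (f : ι → Euc d → ℝ)
    (h : ∀ j ∈ s, Sym d q m (f j)) : Sym d q m (fun x => ∑ j ∈ s, f j x) := by
  classical
  induction s using Finset.cons_induction with
  | empty => exact (Sym.zero m).congr (by simp)
  | cons a s ha ih =>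
    exact ((h a (by simp)).add (ih (fun j hj => h j (by simp [hj])))).congr
      (fun x => (Finset.sum_cons (f := fun j => f j x) ha).symm)

lemma sym_pow {m : ℤ} {f} (h : Sym d q m f) (k : ℕ) :
    Sym d q (k * m) (fun x => f x ^ k) := by
  induction k with
  | zero => exact ((Sym.const 1).congr (by simp)).of_eq (by simp)
  | succ k ih =>
    exact ((ih.mul h).congr (fun x => (pow_succ (f x) k).symm)).of_eq (by push_cast; ring)

lemma sym_r : Sym d q 2 (fun x : Euc d => ∑ j, x j ^ 2) :=
  (sym_sum Finset.univ 2 (fun j x => x j ^ 2) (fun j _ =>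
    (((Sym.coord j).mul (Sym.coord j)).congr (fun x => (pow_two (x j)).symm)).of_eq (by norm_num)))

lemma norm_sq_eq (x : Euc d) : ‖x‖ ^ 2 = ∑ j, x j ^ 2 := by
  rw [EuclideanSpace.norm_eq, Real.sq_sqrt (by positivity)]
  simp [sq_abs]

lemma Pw_eq (x : Euc d) : Pw d q x = 1 + (∑ j, x j ^ 2) ^ q := by
  rw [Pw, pow_mul, norm_sq_eq]

lemma sym_Pw : Sym d q (2 * q) (Pw d q) :=
  ((((Sym.const 1).mono (by positivity)).add ((sym_pow sym_r q).of_eq (by ring))).congr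
    (fun x => (Pw_eq x).symm))

lemma hasFDerivAt_r (x : Euc d) :
    HasFDerivAt (fun y : Euc d => ∑ j, y j ^ 2)
      (∑ j, (2 * x j) • (EuclideanSpace.proj j : Euc d →L[ℝ] ℝ)) x := by
  have h : ∀ j ∈ Finset.univ, HasFDerivAt (fun y : Euc d => y j ^ 2)
      ((2 * x j) • (EuclideanSpace.proj j : Euc d →L[ℝ] ℝ)) x := by
    intro j _
    have h1 := (hasDerivAt_pow 2 (x j)).comp_hasFDerivAt x
      ((EuclideanSpace.proj (𝕜 := ℝ) j).hasFDerivAt (x := x))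
    simp at h1
    exact h1
  simpa using HasFDerivAt.fun_sum h

lemma hasFDerivAt_Pw (x : Euc d) :
    HasFDerivAt (Pw d q)
      (((q : ℝ) * (∑ j, x j ^ 2) ^ (q - 1)) •
        ∑ j, (2 * x j) • (EuclideanSpace.proj j : Euc d →L[ℝ] ℝ)) x := by
  have h := ((hasDerivAt_pow q (∑ j, x j ^ 2)).comp_hasFDerivAt x (hasFDerivAt_r x)).const_add 1
  have hPw : Pw d q = fun y : Euc d => 1 + (∑ j, y j ^ 2) ^ q := funext Pw_eq
  rw [hPw]
  exact h

lemma pd_of_hasFDerivAt {f : Euc d → ℝ} {f' : Euc d →L[ℝ] ℝ} {x : Euc d} (i : Fin d)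
    (h : HasFDerivAt f f' x) : pd i f x = f' (EuclideanSpace.single i 1) := by
  simp [pd, h.fderiv]

lemma pd_Pw (i : Fin d) (x : Euc d) :
    pd i (Pw d q) x = (2 * (q : ℝ)) * (∑ j, x j ^ 2) ^ (q - 1) * x i := by
  rw [pd_of_hasFDerivAt i (hasFDerivAt_Pw x)]
  simp [ContinuousLinearMap.sum_apply, EuclideanSpace.single_apply, Finset.mul_sum,
    mul_ite]
  ring

lemma Pw_pos (x : Euc d) : 0 < Pw d q x := by rw [Pw]; positivity

lemma Pw_ne (x : Euc d) : Pw d q x ≠ 0 := (Pw_pos x).ne'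

lemma diff_Pw : Differentiable ℝ (Pw d q) := fun x => (hasFDerivAt_Pw x).differentiableAt

lemma pd_invP (i : Fin d) (x : Euc d) :
    pd i (fun y => (Pw d q y)⁻¹) x =
      -((Pw d q x)⁻¹ * pd i (Pw d q) x * (Pw d q x)⁻¹) := by
  have h := (hasFDerivAt_inv' (𝕜 := ℝ) (Pw_ne (d := d) (q := q) x)).comp x
    (hasFDerivAt_Pw (q := q) x)
  have h' : HasFDerivAt (fun y => (Pw d q y)⁻¹)
      ((-mulLeftRight ℝ ℝ (Pw d q x)⁻¹ (Pw d q x)⁻¹).comp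
        (((q : ℝ) * (∑ j, x j ^ 2) ^ (q - 1)) •
          ∑ j, (2 * x j) • (EuclideanSpace.proj j : Euc d →L[ℝ] ℝ))) x := h
  rw [pd_of_hasFDerivAt i h', pd_of_hasFDerivAt i (hasFDerivAt_Pw x)]
  simp [mulLeftRight_apply]
  ring

lemma sym_pd_Pw (i : Fin d) : Sym d q (2 * q - 1) (pd i (Pw d q)) := by
  rcases Nat.eq_zero_or_pos q with hq | hq
  · subst hq
    exact (Sym.zero _).congr (fun x => by rw [pd_Pw]; norm_num)
  · exact ((((Sym.const (2 * (q : ℝ))).mul (sym_pow sym_r (q - 1))).mul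
      (Sym.coord i)).congr (fun x => (pd_Pw i x).symm)).of_eq (by omega)

theorem sym_pd {m : ℤ} {f} (h : Sym d q m f) :
    Differentiable ℝ f ∧ ∀ i, Sym d q (m - 1) (pd i f) := by
  induction h with
  | zero m =>
    exact ⟨differentiable_const 0, fun i => (Sym.zero _).congr (fun x => by simp [pd])⟩
  | const c =>
    exact ⟨differentiable_const c, fun i =>
      ((Sym.zero _).congr (fun x => by simp [pd]))⟩
  | coord j =>
    constructor
    · exact (EuclideanSpace.proj (𝕜 := ℝ) j).differentiable
    · intro i
      have e : ∀ x : Euc d, pd i (fun y : Euc d => y j) x = if j = i then 1 else 0 := by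
        intro x
        have hD : HasFDerivAt (fun y : Euc d => y j) (EuclideanSpace.proj (𝕜 := ℝ) j) x :=
          (EuclideanSpace.proj (𝕜 := ℝ) j).hasFDerivAt
        rw [pd_of_hasFDerivAt i hD]
        simp [EuclideanSpace.single_apply]
      exact ((Sym.const _).congr (fun x => (e x).symm)).of_eq (by norm_num)
  | invP =>
    constructor
    · exact fun x => (diff_Pw x).inv (Pw_ne x)
    · intro i
      exact (((Sym.const (-1)).mul ((Sym.invP.mul (sym_pd_Pw i)).mul Sym.invP)).congr
        (fun x => by rw [pd_invP i x]; ring)).of_eq (by ring)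
  | add h1 h2 ih1 ih2 =>
    refine ⟨ih1.1.add ih2.1, fun i => ((ih1.2 i).add (ih2.2 i)).congr (fun x => ?_)⟩
    simp only [pd]
    rw [fderiv_fun_add (ih1.1 x) (ih2.1 x)]
    simp
  | mul h1 h2 ih1 ih2 =>
    refine ⟨ih1.1.mul ih2.1, fun i => ?_⟩
    refine (((h1.mul (ih2.2 i)).of_eq (by ring)).add
      ((h2.mul (ih1.2 i)).of_eq (by ring))).congr (fun x => ?_)
    simp only [pd]
    rw [fderiv_fun_mul (ih1.1 x) (ih2.1 x)]
    simp [smul_eq_mul]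
  | mono h hle ih =>
    exact ⟨ih.1, fun i => (ih.2 i).mono (by omega)⟩

lemma sym_iter {m : ℤ} {f} (h : Sym d q m f) (i : Fin d) (k : ℕ) :
    Sym d q (m - k) ((pd i)^[k] f) := by
  induction k generalizing m f with
  | zero => simpa using h
  | succ k ih =>
    rw [Function.iterate_succ_apply]
    exact (ih ((sym_pd h).2 i)).of_eq (by push_cast; ring)

lemma sym_foldr (l : List (Fin d)) (α : Fin d → ℕ) {m : ℤ} {f} (h : Sym d q m f) :
    Sym d q (m - (l.map α).sum)
      (((l.map fun i => (pd i)^[α i]).foldr (· ∘ ·) id) f) := by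
  induction l generalizing m f with
  | nil => simpa using h
  | cons i l ih =>
    simp only [List.map_cons, List.foldr_cons, List.sum_cons, Function.comp_apply]
    exact (sym_iter (ih h) i (α i)).of_eq (by push_cast; ring)

lemma sym_pdM (α : Fin d → ℕ) {m : ℤ} {f} (h : Sym d q m f) :
    Sym d q (m - msize α) (pdM α f) := by
  have h2 := sym_foldr (List.finRange d) α h
  rw [pdM, List.ofFn_eq_map]
  rwa [msize, Fin.sum_univ_def]

lemma one_add_sq_pos (x : Euc d) : (0:ℝ) < 1 + ‖x‖ ^ 2 := by positivity

theorem sym_bound {m : ℤ} {f} (h : Sym d q m f) :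
    ∃ C > 0, ∀ x : Euc d, |f x| ≤ C * (1 + ‖x‖ ^ 2) ^ ((m : ℝ) / 2) := by
  induction h with
  | zero m =>
    exact ⟨1, one_pos, fun x => by
      simp only [abs_zero]
      positivity⟩
  | const c =>
    refine ⟨|c| + 1, by positivity, fun x => ?_⟩
    simp only [Int.cast_zero, zero_div, Real.rpow_zero, mul_one]
    linarith [abs_nonneg c]
  | coord i =>
    refine ⟨1, one_pos, fun x => ?_⟩
    have h1 : |x i| ≤ ‖x‖ := by
      have h2 : x i ^ 2 ≤ ∑ j, x j ^ 2 :=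
        Finset.single_le_sum (f := fun j => x j ^ 2) (fun j _ => sq_nonneg _) (Finset.mem_univ i)
      rw [← norm_sq_eq] at h2
      nlinarith [abs_nonneg (x i), norm_nonneg x, sq_abs (x i)]
    have h3 : ‖x‖ ≤ (1 + ‖x‖ ^ 2) ^ ((1:ℝ) / 2) := by
      rw [← Real.sqrt_eq_rpow]
      have h4 := Real.sqrt_le_sqrt (show ‖x‖ ^ 2 ≤ 1 + ‖x‖ ^ 2 by linarith)
      rwa [Real.sqrt_sq (norm_nonneg x)] at h4
    calc |x i| ≤ ‖x‖ := h1
      _ ≤ (1 + ‖x‖ ^ 2) ^ ((1:ℝ) / 2) := h3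
      _ = 1 * (1 + ‖x‖ ^ 2) ^ ((((1:ℤ)):ℝ) / 2) := by norm_num
  | invP =>
    refine ⟨2 ^ q, by positivity, fun x => ?_⟩
    set t : ℝ := ‖x‖ ^ 2 with ht
    have ht0 : 0 ≤ t := by positivity
    have key : (1 + t) ^ q ≤ 2 ^ q * Pw d q x := by
      have hPw : Pw d q x = 1 + t ^ q := by
        rw [Pw, ht, ← pow_mul]
      rw [hPw]
      rcases le_total t 1 with h | h
      · calc (1 + t) ^ q ≤ 2 ^ q := pow_le_pow_left₀ (by linarith) (by linarith) q
          _ ≤ 2 ^ q * (1 + t ^ q) := by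
            nlinarith [pow_nonneg ht0 q, pow_pos (show (0:ℝ) < 2 by norm_num) q]
      · calc (1 + t) ^ q ≤ (2 * t) ^ q := pow_le_pow_left₀ (by linarith) (by linarith) q
          _ = 2 ^ q * t ^ q := mul_pow 2 t q
          _ ≤ 2 ^ q * (1 + t ^ q) := by nlinarith [pow_pos (show (0:ℝ) < 2 by norm_num) q]
    have hrw : (1 + t) ^ ((-(2 * (q:ℤ)) : ℝ) / 2) = ((1 + t) ^ q)⁻¹ := by
      rw [show ((-(2 * (q:ℤ)) : ℝ) / 2 : ℝ) = -(q:ℝ) by push_cast; ring,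
        Real.rpow_neg (by linarith), Real.rpow_natCast]
    have habs : |(Pw d q x)⁻¹| = (Pw d q x)⁻¹ := abs_of_pos (inv_pos.mpr (Pw_pos x))
    rw [habs]
    have hA : (0:ℝ) < (1 + t) ^ q := by positivity
    have h1 : (1 + t) ^ q / 2 ^ q ≤ Pw d q x := by
      rw [div_le_iff₀ (by positivity)]
      linarith [key]
    have h2 := inv_anti₀ (show (0:ℝ) < (1 + t) ^ q / 2 ^ q by positivity) h1
    rw [show (((-(2 * (q:ℕ)) : ℤ)) : ℝ) = (-(2 * (q:ℤ)) : ℝ) by push_cast; ring]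
    rw [hrw]
    calc (Pw d q x)⁻¹ ≤ ((1 + t) ^ q / 2 ^ q)⁻¹ := h2
      _ = 2 ^ q * ((1 + t) ^ q)⁻¹ := by field_simp
  | add h1 h2 ih1 ih2 =>
    obtain ⟨C1, hC1, hb1⟩ := ih1
    obtain ⟨C2, hC2, hb2⟩ := ih2
    refine ⟨C1 + C2, by positivity, fun x => ?_⟩
    calc |_ + _| ≤ _ := abs_add_le _ _
      _ ≤ C1 * (1 + ‖x‖ ^ 2) ^ ((_ : ℝ) / 2) + C2 * (1 + ‖x‖ ^ 2) ^ ((_ : ℝ) / 2) :=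
          add_le_add (hb1 x) (hb2 x)
      _ = (C1 + C2) * (1 + ‖x‖ ^ 2) ^ ((_ : ℝ) / 2) := by ring
  | @mul m n f g h1 h2 ih1 ih2 =>
    obtain ⟨C1, hC1, hb1⟩ := ih1
    obtain ⟨C2, hC2, hb2⟩ := ih2
    refine ⟨C1 * C2, by positivity, fun x => ?_⟩
    have hp := one_add_sq_pos x
    calc |f x * g x| = |f x| * |g x| := abs_mul _ _
      _ ≤ (C1 * (1 + ‖x‖ ^ 2) ^ ((m : ℝ) / 2)) * (C2 * (1 + ‖x‖ ^ 2) ^ ((n : ℝ) / 2)) :=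
          mul_le_mul (hb1 x) (hb2 x) (abs_nonneg _) (by positivity)
      _ = C1 * C2 * ((1 + ‖x‖ ^ 2) ^ ((m : ℝ) / 2) * (1 + ‖x‖ ^ 2) ^ ((n : ℝ) / 2)) := by ring
      _ = C1 * C2 * (1 + ‖x‖ ^ 2) ^ (((m + n : ℤ) : ℝ) / 2) := by
          rw [← Real.rpow_add hp]
          push_cast
          ring_nf
  | @mono m n f h hle ih =>
    obtain ⟨C, hC, hb⟩ := ih
    refine ⟨C, hC, fun x => ?_⟩
    have hp := one_add_sq_pos x
    have h1 : (1 + ‖x‖ ^ 2 : ℝ) ^ ((m : ℝ) / 2) ≤ (1 + ‖x‖ ^ 2) ^ ((n : ℝ) / 2) := by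
      apply Real.rpow_le_rpow_of_exponent_le (by nlinarith [sq_nonneg ‖x‖])
      have : (m : ℝ) ≤ (n : ℝ) := by exact_mod_cast hle
      linarith
    exact le_trans (hb x) (by nlinarith)

theorem weight_decay_core (α₁ α₂ : Fin d → ℕ) :
    ∃ C > 0, ∀ x : Euc d,
      |pdM α₂ (fun y => (Pw d q y)⁻¹ * pdM α₁ (Pw d q) y) x| ≤
        C * (1 + ‖x‖ ^ 2) ^ (-((msize α₁ : ℝ) + (msize α₂ : ℝ)) / 2) := by
  have h0 : Sym d q (-(msize α₁ : ℤ)) (fun y => (Pw d q y)⁻¹ * pdM α₁ (Pw d q) y) :=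
    (Sym.invP.mul (sym_pdM α₁ sym_Pw)).of_eq (by push_cast; ring)
  have h1 := sym_pdM α₂ h0
  obtain ⟨C, hC, hb⟩ := sym_bound h1
  refine ⟨C, hC, fun x => ?_⟩
  have := hb x
  rwa [show (((-(msize α₁ : ℤ) - (msize α₂ : ℕ) : ℤ)) : ℝ) / 2 =
    -((msize α₁ : ℝ) + (msize α₂ : ℝ)) / 2 by push_cast; ring] at this

end WLD

/-- decay of derivatives of `P⁻¹ · D^{α₁} P` for the polynomial weight
`P(x) = 1 + |x|^{2q}`. -/
theorem weight_logderivative_decay (d q : ℕ) (α₁ α₂ : Fin d → ℕ) :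
    ∃ C > 0, ∀ x : Euc d,
      |pdM α₂ (fun y => (Pw d q y)⁻¹ * pdM α₁ (Pw d q) y) x| ≤
        C * (1 + ‖x‖ ^ 2) ^ (-((msize α₁ : ℝ) + (msize α₂ : ℝ)) / 2) := by
  exact WLD.weight_decay_core α₁ α₂
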